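/- The energy score ES(P, x) = E‖X − x‖₂ − (1/2)·E‖X − X'‖₂, where X, X' are i.i.d. with law P having finite first moment, is nonnegative, and equals zero if and only if P is the Dirac measure at x. -/

import Mathlib

set_option maxHeartbeats 1000000


open MeasureTheory

open scoped RealInnerProductSpace

/-- The energy score `ES(P, x) = E‖X − x‖₂ − ½ E‖X − X'‖₂`, where `X, X'` are i.i.d.
with law `P` (a Borel probability measure on ℝ^D with finite first moment), is
nonnegative, and it equals zero if and only if `P` is the Dirac measure at `x`. -/
theorem energy_score_nonneg_and_zero_iff_dirac
    (D : ℕ) (P : Measure (EuclideanSpace ℝ (Fin D))) [IsProbabilityMeasure P]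
    (hmom : Integrable (fun v => ‖v‖) P) (x : EuclideanSpace ℝ (Fin D)) :
    let ES : ℝ := (∫ v, ‖v - x‖ ∂P) - (1 / 2) * ∫ v, ∫ w, ‖v - w‖ ∂P ∂P
    0 ≤ ES ∧ (ES = 0 ↔ P = Measure.dirac x) := by
  intro ES
  have hESdef : ES = (∫ v, ‖v - x‖ ∂P) - (1 / 2) * ∫ v, ∫ w, ‖v - w‖ ∂P ∂P := rfl
  -- basic integrability facts
  have hid : Integrable (fun v : EuclideanSpace ℝ (Fin D) => v) P :=
    (integrable_norm_iff aestronglyMeasurable_id).mp hmom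
  have ha : Integrable (fun v : EuclideanSpace ℝ (Fin D) => v - x) P :=
    hid.sub (integrable_const x)
  have hf : Integrable (fun v : EuclideanSpace ℝ (Fin D) => ‖v - x‖) P := ha.norm
  set m : ℝ := ∫ v, ‖v - x‖ ∂P with hm
  have hm0 : 0 ≤ m := integral_nonneg fun v => norm_nonneg _
  -- projections are measure preserving
  have hfst : MeasurePreserving Prod.fst (P.prod P) P := ⟨measurable_fst, by simp⟩
  have hsnd : MeasurePreserving Prod.snd (P.prod P) P := ⟨measurable_snd, by simp⟩
  have h1 : Integrable (fun p : EuclideanSpace ℝ (Fin D) × EuclideanSpace ℝ (Fin D) =>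
      ‖p.1 - x‖) (P.prod P) :=
    (hfst.integrable_comp hf.aestronglyMeasurable).mpr hf
  have h2 : Integrable (fun p : EuclideanSpace ℝ (Fin D) × EuclideanSpace ℝ (Fin D) =>
      ‖p.2 - x‖) (P.prod P) :=
    (hsnd.integrable_comp hf.aestronglyMeasurable).mpr hf
  have hsum : Integrable (fun p : EuclideanSpace ℝ (Fin D) × EuclideanSpace ℝ (Fin D) =>
      ‖p.1 - x‖ + ‖p.2 - x‖) (P.prod P) := h1.add h2
  have htri : ∀ p : EuclideanSpace ℝ (Fin D) × EuclideanSpace ℝ (Fin D),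
      ‖p.1 - p.2‖ ≤ ‖p.1 - x‖ + ‖p.2 - x‖ := by
    intro p
    calc ‖p.1 - p.2‖ = dist p.1 p.2 := (dist_eq_norm _ _).symm
      _ ≤ dist p.1 x + dist x p.2 := dist_triangle _ _ _
      _ = ‖p.1 - x‖ + ‖p.2 - x‖ := by
          rw [dist_eq_norm, dist_eq_norm, norm_sub_rev x p.2]
  have hF : Integrable (fun p : EuclideanSpace ℝ (Fin D) × EuclideanSpace ℝ (Fin D) =>
      ‖p.1 - p.2‖) (P.prod P) := by
    refine hsum.mono' ((continuous_fst.sub continuous_snd).norm).aestronglyMeasurable ?_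
    filter_upwards with p
    simpa using htri p
  -- double integral equals integral over the product measure
  have hdouble : ∫ v, ∫ w, ‖v - w‖ ∂P ∂P
      = ∫ p, ‖p.1 - p.2‖ ∂(P.prod P) := integral_integral hF
  -- integrals of the marginal functions
  have hI1 : ∫ p, ‖p.1 - x‖ ∂(P.prod P) = m := by
    rw [integral_prod _ h1]
    simp only [integral_const, measure_univ, ENNReal.toReal_one, probReal_univ, one_smul]
    rfl
  have hI2 : ∫ p, ‖p.2 - x‖ ∂(P.prod P) = m := by
    rw [integral_prod _ h2]
    rw [show (∫ v, ∫ w, ‖(v, w).2 - x‖ ∂P ∂P : ℝ) = ∫ _v, m ∂P from by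
      exact integral_congr_ae (Filter.Eventually.of_forall fun v => hm.symm)]
    simp
  have hsum_int : ∫ p, (‖p.1 - x‖ + ‖p.2 - x‖) ∂(P.prod P) = m + m := by
    rw [integral_add h1 h2, hI1, hI2]
  -- the key inequality
  have hAle : ∫ p, ‖p.1 - p.2‖ ∂(P.prod P) ≤ m + m := by
    rw [← hsum_int]
    exact integral_mono hF hsum htri
  have hES_nonneg : 0 ≤ ES := by
    rw [hESdef, hdouble]
    linarith [hAle]
  refine ⟨hES_nonneg, ?_, ?_⟩
  · -- ES = 0 → P = dirac x
    intro hES0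
    have hA : ∫ p, ‖p.1 - p.2‖ ∂(P.prod P) = m + m := by
      rw [hESdef, hdouble] at hES0
      linarith
    -- the nonnegative defect has zero integral, hence vanishes a.e.
    have hg_int : Integrable (fun p : EuclideanSpace ℝ (Fin D) × EuclideanSpace ℝ (Fin D) =>
        ‖p.1 - x‖ + ‖p.2 - x‖ - ‖p.1 - p.2‖) (P.prod P) := hsum.sub hF
    have hg0 : (fun p : EuclideanSpace ℝ (Fin D) × EuclideanSpace ℝ (Fin D) =>
        ‖p.1 - x‖ + ‖p.2 - x‖ - ‖p.1 - p.2‖) =ᵐ[P.prod P] 0 := by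
      rw [← integral_eq_zero_iff_of_nonneg_ae
        (Filter.Eventually.of_forall fun p => by simpa using htri p) hg_int]
      rw [integral_sub hsum hF, hsum_int, hA, sub_self]
    -- hence equality in the triangle inequality a.e., so the inner products are extremal
    have hinner_ae : (fun p : EuclideanSpace ℝ (Fin D) × EuclideanSpace ℝ (Fin D) =>
        ⟪p.1 - x, p.2 - x⟫) =ᵐ[P.prod P]
        (fun p => -(‖p.1 - x‖ * ‖p.2 - x‖)) := by
      filter_upwards [hg0] with p hp
      simp only [Pi.zero_apply] at hp
      have heq : ‖p.1 - p.2‖ = ‖p.1 - x‖ + ‖p.2 - x‖ := by linarith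
      have hsub : (p.1 - x) - (p.2 - x) = p.1 - p.2 := by abel
      have hsq : ‖(p.1 - x) - (p.2 - x)‖ ^ 2
          = ‖p.1 - x‖ ^ 2 - 2 * ⟪p.1 - x, p.2 - x⟫ + ‖p.2 - x‖ ^ 2 :=
        norm_sub_sq_real _ _
      rw [hsub, heq] at hsq
      nlinarith [hsq]
    -- integrability of the inner product on the product
    have hprod_mul : Integrable (fun p : EuclideanSpace ℝ (Fin D) × EuclideanSpace ℝ (Fin D) =>
        ‖p.1 - x‖ * ‖p.2 - x‖) (P.prod P) := hf.mul_prod hf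
    have hinner_int : Integrable (fun p : EuclideanSpace ℝ (Fin D) × EuclideanSpace ℝ (Fin D) =>
        ⟪p.1 - x, p.2 - x⟫) (P.prod P) := by
      refine hprod_mul.mono' ?_ ?_
      · exact ((continuous_fst.sub continuous_const).inner
          (continuous_snd.sub continuous_const)).aestronglyMeasurable
      · filter_upwards with p
        have := abs_real_inner_le_norm (p.1 - x) (p.2 - x)
        simpa [Real.norm_eq_abs, abs_of_nonneg (mul_nonneg (norm_nonneg _) (norm_nonneg _))]
          using this
    -- compute the integral of the inner products in two ways
    set c : EuclideanSpace ℝ (Fin D) := ∫ v, (v - x) ∂P with hc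
    have hL : ∫ p, ⟪p.1 - x, p.2 - x⟫ ∂(P.prod P) = ⟪c, c⟫ := by
      rw [← integral_integral (f := fun v w => ⟪v - x, w - x⟫) hinner_int]
      have hin : ∀ v : EuclideanSpace ℝ (Fin D),
          ∫ w, ⟪v - x, w - x⟫ ∂P = ⟪v - x, c⟫ := fun v => integral_inner ha _
      calc ∫ v, ∫ w, ⟪v - x, w - x⟫ ∂P ∂P = ∫ v, ⟪v - x, c⟫ ∂P := by
            exact integral_congr_ae (Filter.Eventually.of_forall fun v => hin v)
        _ = ∫ v, ⟪c, v - x⟫ ∂P := by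
            exact integral_congr_ae (Filter.Eventually.of_forall fun v => real_inner_comm _ _)
        _ = ⟪c, c⟫ := integral_inner ha c
    have hR : ∫ p, ⟪p.1 - x, p.2 - x⟫ ∂(P.prod P) = -(m * m) := by
      rw [integral_congr_ae hinner_ae, integral_neg, integral_prod_mul (fun v => ‖v - x‖) (fun w => ‖w - x‖)]
    have hcc : ⟪c, c⟫ = -(m * m) := by rw [← hL, hR]
    have hm_zero : m = 0 := by
      have h1 : (0:ℝ) ≤ ⟪c, c⟫ := real_inner_self_nonneg
      nlinarith
    -- m = 0 forces P-a.e. v = x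
    have hae : ∀ᵐ v ∂P, v = x := by
      have := (integral_eq_zero_iff_of_nonneg_ae
        (Filter.Eventually.of_forall fun v => norm_nonneg (v - x)) hf).mp hm_zero
      filter_upwards [this] with v hv
      have : ‖v - x‖ = 0 := hv
      have := norm_eq_zero.mp this
      exact sub_eq_zero.mp this
    -- conclude P = dirac x
    have hcompl : P {x}ᶜ = 0 := by
      have : {v : EuclideanSpace ℝ (Fin D) | ¬ v = x} = {x}ᶜ := by
        ext v; simp
      simpa [ae_iff, this] using hae
    ext s hs
    rw [Measure.dirac_apply' x hs]
    by_cases hx : x ∈ s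
    · have hsc : P sᶜ = 0 := by
        refine measure_mono_null ?_ hcompl
        intro v hv
        simp only [Set.mem_compl_iff, Set.mem_singleton_iff]
        rintro rfl
        exact hv hx
      have : P s = 1 := (prob_compl_eq_zero_iff hs).mp hsc
      simp [this, Set.indicator_of_mem hx]
    · have : P s = 0 := by
        refine measure_mono_null ?_ hcompl
        intro v hv hveq
        rw [Set.mem_singleton_iff] at hveq
        exact hx (hveq ▸ hv)
      simp [this, Set.indicator_of_notMem hx]
  · -- P = dirac x → ES = 0
    intro hP
    rw [hESdef, hm, hP]
    simp [integral_dirac]
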